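/- Let Q be an n×n real symmetric matrix with nonpositive off-diagonal entries and eigenvalues λ_1 ≥ ... ≥ λ_n. Let S_1, ..., S_m be a partition of the index set {1,...,n}, let p_1, ..., p_m be natural numbers with Σ_{k=1}^m p_k = p, and let γ > 0. Define the penalized objective F(x) = xᵗ Q x − γ Σ_{k=1}^m (Σ_{j∈S_k} x_j − p_k)². Then for every binary vector x ∈ {0,1}^n satisfying the partitioned constraints Σ_{j∈S_k} x_j = p_k for all k = 1,...,m, one has F(x) = xᵗ Q x ≤ Σ_{i=1}^p λ_i. -/

import Mathlib

open Matrix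

lemma keyA {n : ℕ} (lam : Fin n → ℝ) (hlam : Antitone lam) (s : Fin n → ℝ)
    (h0 : ∀ i, 0 ≤ s i) (h1 : ∀ i, s i ≤ 1) (p : ℕ) (hs : ∑ i, s i = p) :
    ∑ i, lam i * s i ≤ ∑ i ∈ Finset.univ.filter (fun i : Fin n => (i : ℕ) < p), lam i := by
  have hRHS : ∑ i ∈ Finset.univ.filter (fun i : Fin n => (i : ℕ) < p), lam i
      = ∑ i : Fin n, lam i * (if (i : ℕ) < p then (1:ℝ) else 0) := by
    rw [Finset.sum_filter]
    refine Finset.sum_congr rfl fun i _ => ?_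
    split <;> simp
  rw [hRHS]
  by_cases hp : p < n
  · set c := lam ⟨p, hp⟩ with hc
    have hχ : ∑ i : Fin n, (if (i : ℕ) < p then (1:ℝ) else 0) = p := by
      have hfe : Finset.univ.filter (fun i : Fin n => (i : ℕ) < p) = Finset.Iio ⟨p, hp⟩ := by
        ext i; simp [Fin.lt_def]
      rw [Finset.sum_ite, Finset.sum_const, Finset.sum_const, hfe, Fin.card_Iio]
      simp
    have key : ∀ i : Fin n, (lam i - c) * (s i - (if (i : ℕ) < p then (1:ℝ) else 0)) ≤ 0 := by
      intro i
      by_cases hi : (i : ℕ) < p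
      · have hle : c ≤ lam i := by
          apply hlam
          exact Fin.le_def.mpr (le_of_lt hi)
        simp only [hi, if_true]
        have : s i - 1 ≤ 0 := by linarith [h1 i]
        nlinarith
      · have hle : lam i ≤ c := by
          apply hlam
          exact Fin.le_def.mpr (le_of_not_gt hi)
        simp only [hi, if_false, sub_zero]
        nlinarith [h0 i]
    have hsum : ∑ i : Fin n, (lam i - c) * (s i - (if (i : ℕ) < p then (1:ℝ) else 0)) ≤ 0 :=
      Finset.sum_nonpos fun i _ => key i
    have hexp : ∑ i : Fin n, (lam i - c) * (s i - (if (i : ℕ) < p then (1:ℝ) else 0))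
        = (∑ i, lam i * s i) - (∑ i : Fin n, lam i * (if (i : ℕ) < p then (1:ℝ) else 0))
          - c * ((∑ i, s i) - ∑ i : Fin n, (if (i : ℕ) < p then (1:ℝ) else 0)) := by
      simp only [sub_mul, mul_sub, Finset.sum_sub_distrib, Finset.mul_sum]
      ring
    rw [hexp, hs, hχ] at hsum
    linarith
  · push_neg at hp
    have hone : ∀ i : Fin n, s i = 1 := by
      have hsum0 : ∑ i : Fin n, (1 - s i) = (n : ℝ) - p := by
        rw [Finset.sum_sub_distrib, hs]
        simp
      have hle0 : ∑ i : Fin n, (1 - s i) ≤ 0 := by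
        rw [hsum0]
        have : (n : ℝ) ≤ p := by exact_mod_cast hp
        linarith
      have hge0 : ∀ i ∈ Finset.univ, (0:ℝ) ≤ 1 - s i := fun i _ => by linarith [h1 i]
      have heq0 : ∑ i : Fin n, (1 - s i) = 0 :=
        le_antisymm hle0 (Finset.sum_nonneg hge0)
      intro i
      have := (Finset.sum_eq_zero_iff_of_nonneg hge0).mp heq0 i (Finset.mem_univ i)
      linarith
    have hpn : ∀ i : Fin n, (i : ℕ) < p := fun i => lt_of_lt_of_le i.isLt hp
    refine le_of_eq (Finset.sum_congr rfl fun i _ => ?_)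
    simp [hone i, hpn i]

/-- penalized objective `F(x) = xᵗQx − γ ∑_k (∑_{j ∈ S k} x j − p k)²`
agrees with `xᵗQx` on vectors satisfying the partitioned constraints, and is
bounded by the sum of the `p` largest eigenvalues of `Q`. -/
theorem stmt1 {n m : ℕ} (Q : Matrix (Fin n) (Fin n) ℝ) (hQ : Q.IsHermitian)
    (hoff : ∀ i j : Fin n, i ≠ j → Q i j ≤ 0)
    (lam : Fin n → ℝ) (hlam : Antitone lam)
    (σ : Equiv.Perm (Fin n)) (hσ : ∀ i, lam (σ i) = hQ.eigenvalues i)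
    (S : Fin m → Finset (Fin n))
    (hdisj : ∀ k l : Fin m, k ≠ l → Disjoint (S k) (S l))
    (hcover : Finset.univ.biUnion S = Finset.univ)
    (pk : Fin m → ℕ) (p : ℕ) (hpk : ∑ k, pk k = p)
    (γ : ℝ) (hγ : 0 < γ)
    (x : Fin n → ℝ) (hx : ∀ i, x i = 0 ∨ x i = 1)
    (hcon : ∀ k : Fin m, ∑ j ∈ S k, x j = pk k) :
    (x ⬝ᵥ Q.mulVec x - γ * ∑ k : Fin m, ((∑ j ∈ S k, x j) - pk k) ^ 2
        = x ⬝ᵥ Q.mulVec x)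
    ∧ x ⬝ᵥ Q.mulVec x ≤ ∑ k ∈ Finset.univ.filter (fun i : Fin n => (i : ℕ) < p), lam k := by
  have hx0 : ∀ i, 0 ≤ x i := fun i => by rcases hx i with h | h <;> simp [h]
  have hx1 : ∀ i, x i ≤ 1 := fun i => by rcases hx i with h | h <;> simp [h]
  have hxx : ∀ i, x i * x i = x i := fun i => by rcases hx i with h | h <;> simp [h]
  constructor
  · have : ∀ k : Fin m, ((∑ j ∈ S k, x j) - (pk k : ℝ)) ^ 2 = 0 := fun k => by
      rw [hcon k]; ring
    simp [this]
  -- sum of entries is p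
  have hsump : ∑ j, x j = (p : ℝ) := by
    calc ∑ j, x j = ∑ j ∈ Finset.univ.biUnion S, x j := by rw [hcover]
      _ = ∑ k, ∑ j ∈ S k, x j :=
          Finset.sum_biUnion (fun k _ l _ hkl => hdisj k l hkl)
      _ = ∑ k, (pk k : ℝ) := Finset.sum_congr rfl fun k _ => hcon k
      _ = (p : ℝ) := by rw [← hpk]; push_cast; ring
  set U : Matrix (Fin n) (Fin n) ℝ := (hQ.eigenvectorUnitary : Matrix (Fin n) (Fin n) ℝ)
    with hUdef
  have hU1 : star U * U = 1 := Matrix.mem_unitaryGroup_iff'.mp hQ.eigenvectorUnitary.2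
  have hU2 : U * star U = 1 := Matrix.mem_unitaryGroup_iff.mp hQ.eigenvectorUnitary.2
  have hcol : ∀ a : Fin n, ∑ j, (U j a) ^ 2 = 1 := by
    intro a
    have := congrArg (fun M : Matrix (Fin n) (Fin n) ℝ => M a a) hU1
    simpa [Matrix.mul_apply, Matrix.one_apply, sq] using this
  have hrow : ∀ j : Fin n, ∑ a, (U j a) ^ 2 = 1 := by
    intro j
    have := congrArg (fun M : Matrix (Fin n) (Fin n) ℝ => M j j) hU2
    simpa [Matrix.mul_apply, Matrix.one_apply, sq] using this
  have hdiag : ∀ j, Q j j = ∑ a, hQ.eigenvalues a * (U j a) ^ 2 := by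
    intro j
    conv_lhs => rw [hQ.spectral_theorem]
    simp only [Unitary.conjStarAlgAut_apply, Matrix.mul_apply, Matrix.diagonal_apply, Function.comp_apply,
      RCLike.ofReal_real_eq_id, id_eq, Matrix.star_apply, star_trivial, mul_ite, mul_zero,
      ite_mul, zero_mul, Finset.sum_ite_eq, Finset.sum_ite_eq', Finset.mem_univ, if_true]
    exact Finset.sum_congr rfl fun a _ => by ring
  -- bound quadratic form by diagonal part
  have hQx : x ⬝ᵥ Q.mulVec x ≤ ∑ j, Q j j * x j := by
    have hdot : x ⬝ᵥ Q.mulVec x = ∑ i, ∑ j, x i * (Q i j * x j) := by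
      simp [dotProduct, Matrix.mulVec, Finset.mul_sum]
    rw [hdot]
    apply Finset.sum_le_sum
    intro i _
    have hterm : ∀ j ∈ Finset.univ, x i * (Q i j * x j)
        ≤ if j = i then Q i i * x i else 0 := by
      intro j _
      by_cases hji : j = i
      · subst hji
        simp only [if_true]
        apply le_of_eq
        calc x j * (Q j j * x j) = Q j j * (x j * x j) := by ring
          _ = Q j j * x j := by rw [hxx]
      · simp only [hji, if_false]
        have hq : Q i j ≤ 0 := hoff i j (fun h => hji h.symm)
        have := mul_nonneg (hx0 i) (hx0 j)
        nlinarith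
    calc ∑ j, x i * (Q i j * x j) ≤ ∑ j, if j = i then Q i i * x i else 0 :=
          Finset.sum_le_sum hterm
      _ = Q i i * x i := by simp
  -- the weights
  set t : Fin n → ℝ := fun a => ∑ j, (U j a) ^ 2 * x j with htdef
  have ht0 : ∀ a, 0 ≤ t a := fun a =>
    Finset.sum_nonneg fun j _ => mul_nonneg (sq_nonneg _) (hx0 j)
  have ht1 : ∀ a, t a ≤ 1 := by
    intro a
    calc t a ≤ ∑ j, (U j a) ^ 2 :=
          Finset.sum_le_sum fun j _ => by nlinarith [sq_nonneg (U j a), hx1 j, hx0 j]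
      _ = 1 := hcol a
  have hts : ∑ a, t a = (p : ℝ) := by
    rw [htdef]
    calc ∑ a : Fin n, ∑ j, (U j a) ^ 2 * x j = ∑ j, ∑ a : Fin n, (U j a) ^ 2 * x j :=
          Finset.sum_comm
      _ = ∑ j, (∑ a : Fin n, (U j a) ^ 2) * x j := by
          refine Finset.sum_congr rfl fun j _ => ?_; rw [Finset.sum_mul]
      _ = ∑ j, x j := by
          refine Finset.sum_congr rfl fun j _ => ?_; rw [hrow j, one_mul]
      _ = (p : ℝ) := hsump
  have hdiagsum : ∑ j, Q j j * x j = ∑ a, hQ.eigenvalues a * t a := by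
    calc ∑ j, Q j j * x j = ∑ j, ∑ a, hQ.eigenvalues a * (U j a) ^ 2 * x j := by
          refine Finset.sum_congr rfl fun j _ => ?_
          rw [hdiag j, Finset.sum_mul]
      _ = ∑ a, ∑ j, hQ.eigenvalues a * (U j a) ^ 2 * x j := Finset.sum_comm
      _ = ∑ a, hQ.eigenvalues a * t a := by
          refine Finset.sum_congr rfl fun a _ => ?_
          rw [htdef, Finset.mul_sum]
          exact Finset.sum_congr rfl fun j _ => by ring
  have hreindex : ∑ a, hQ.eigenvalues a * t a = ∑ i, lam i * t (σ.symm i) := by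
    calc ∑ a, hQ.eigenvalues a * t a = ∑ a, lam (σ a) * t (σ.symm (σ a)) := by
          refine Finset.sum_congr rfl fun a _ => ?_
          rw [hσ a, Equiv.symm_apply_apply]
      _ = ∑ i, lam i * t (σ.symm i) := Equiv.sum_comp σ (fun i => lam i * t (σ.symm i))
  have hkey := keyA lam hlam (fun i => t (σ.symm i))
    (fun i => ht0 _) (fun i => ht1 _) p
    (by rw [Equiv.sum_comp σ.symm t]; exact hts)
  calc x ⬝ᵥ Q.mulVec x ≤ ∑ j, Q j j * x j := hQx
    _ = ∑ i, lam i * t (σ.symm i) := by rw [hdiagsum, hreindex]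
    _ ≤ _ := hkey
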